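/- Let A be a unital C*-algebra with a tracial state τ. Let p ≥ 2 be an integer, let ξ₁, …, ξ_p ∈ A be self-adjoint elements with ‖ξ_i‖∞ ≤ 1 for all i, and let α₁, …, α_p ∈ ℝ. Let δ ∈ (0,1) and ε ∈ (0, δ²/(p−1)) be real numbers. Assume ‖ξ_i‖₂ ≥ δ for every 1 ≤ i ≤ p, and |τ(ξ_i ξ_j)| ≤ ε for all 1 ≤ i < j ≤ p. Then there exists h ∈ A with h* = h, ‖h‖∞ ≤ (Σ_{j=1}^p |α_j|)/(δ² − (p−1)ε), and τ(h ξ_i) = α_i for every 1 ≤ i ≤ p. -/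

import Mathlib

/-- A tracial state on a unital C*-algebra `A`, viewed as a `ℂ`-linear functional:
it is unital, takes nonnegative real values on elements of the form `a* a`,
and is tracial. -/
structure IsTracialState {A : Type*} [NormedRing A] [StarRing A] [NormedAlgebra ℂ A]
    (τ : A →ₗ[ℂ] ℂ) : Prop where
  map_one : τ 1 = 1
  nonneg_re : ∀ a : A, 0 ≤ (τ (star a * a)).re
  im_eq_zero : ∀ a : A, (τ (star a * a)).im = 0
  trace_comm : ∀ a b : A, τ (a * b) = τ (b * a)

/-- The 2-norm `‖x‖₂ = τ(x* x)^{1/2}` associated with a tracial state `τ`. -/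
noncomputable def trNorm2 {A : Type*} [NormedRing A] [StarRing A] [NormedAlgebra ℂ A]
    (τ : A →ₗ[ℂ] ℂ) (x : A) : ℝ :=
  Real.sqrt ((τ (star x * x)).re)

/-- Lemma 5.3: given self-adjoint contractions `ξ₁, …, ξ_p` in a tracial
C*-algebra with `‖ξ_i‖₂ ≥ δ` and `|τ(ξ_i ξ_j)| ≤ ε` for `i < j`, where
`0 < δ < 1` and `0 < ε < δ²/(p−1)`, and target values `α₁, …, α_p ∈ ℝ`,
there is a self-adjoint `h` with `‖h‖ ≤ (Σ|α_j|)/(δ² − (p−1)ε)` and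
`τ(h ξ_i) = α_i` for all `i`. -/
theorem exists_selfAdjoint_with_prescribed_traces
    {A : Type*} [NormedRing A] [StarRing A] [CStarRing A]
    [NormedAlgebra ℂ A] [StarModule ℂ A] [CompleteSpace A]
    (τ : A →ₗ[ℂ] ℂ) (hτ : IsTracialState τ)
    (p : ℕ) (hp : 2 ≤ p) (ξ : Fin p → A)
    (hsa : ∀ i, star (ξ i) = ξ i) (hcontr : ∀ i, ‖ξ i‖ ≤ 1)
    (α : Fin p → ℝ) (δ ε : ℝ)
    (hδ0 : 0 < δ) (hδ1 : δ < 1)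
    (hε0 : 0 < ε) (hε1 : ε < δ ^ 2 / ((p : ℝ) - 1))
    (hnorm2 : ∀ i, δ ≤ trNorm2 τ (ξ i))
    (hortho : ∀ i j : Fin p, i < j → ‖τ (ξ i * ξ j)‖ ≤ ε) :
    ∃ h : A, star h = h ∧
      ‖h‖ ≤ (∑ j, |α j|) / (δ ^ 2 - ((p : ℝ) - 1) * ε) ∧
      ∀ i, τ (h * ξ i) = (α i : ℂ) := by
  classical
  have hp1 : (1:ℝ) ≤ (p:ℝ) - 1 := by
    have : (2:ℝ) ≤ (p:ℝ) := by exact_mod_cast hp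
    linarith
  have hp0 : (0:ℝ) < (p:ℝ) - 1 := by linarith
  have hDpos : 0 < δ ^ 2 - ((p : ℝ) - 1) * ε := by
    have h := (lt_div_iff₀ hp0).mp hε1
    nlinarith
  -- imaginary parts vanish
  have him : ∀ i j : Fin p, (τ (ξ i * ξ j)).im = 0 := by
    intro i j
    have h1 : (τ (star (ξ i + ξ j) * (ξ i + ξ j))).im = 0 := hτ.im_eq_zero _
    have h2 : (τ (star (ξ i) * ξ i)).im = 0 := hτ.im_eq_zero _
    have h3 : (τ (star (ξ j) * ξ j)).im = 0 := hτ.im_eq_zero _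
    rw [star_add, hsa i, hsa j] at h1
    rw [hsa i] at h2
    rw [hsa j] at h3
    have hexp : τ ((ξ i + ξ j) * (ξ i + ξ j)) =
        τ (ξ i * ξ i) + τ (ξ i * ξ j) + (τ (ξ j * ξ i) + τ (ξ j * ξ j)) := by
      rw [add_mul, mul_add, mul_add, map_add, map_add, map_add]
    have hji : τ (ξ j * ξ i) = τ (ξ i * ξ j) := hτ.trace_comm _ _
    rw [hexp, hji] at h1
    simp only [Complex.add_im] at h1
    linarith
  -- the real Gram matrix
  set G : Matrix (Fin p) (Fin p) ℝ := fun i j => (τ (ξ i * ξ j)).re with hG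
  have hGsymm : ∀ i j, G i j = G j i := by
    intro i j
    simp only [hG]
    rw [hτ.trace_comm]
  have hGdiag : ∀ i, δ ^ 2 ≤ G i i := by
    intro i
    have h := hnorm2 i
    rw [trNorm2, hsa i] at h
    have := Real.sq_sqrt (hsa i ▸ hτ.nonneg_re (ξ i))
    nlinarith [Real.sqrt_nonneg ((τ (ξ i * ξ i)).re)]
  have hGoff : ∀ i j, i ≠ j → |G i j| ≤ ε := by
    intro i j hij
    have key : ∀ a b : Fin p, a < b → |G a b| ≤ ε := by
      intro a b hab
      have := hortho a b hab
      calc |G a b| = |(τ (ξ a * ξ b)).re| := rfl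
        _ ≤ ‖τ (ξ a * ξ b)‖ := Complex.abs_re_le_norm _
        _ ≤ ε := this
    rcases lt_or_gt_of_ne hij with h | h
    · exact key i j h
    · rw [hGsymm]; exact key j i h
  -- strict diagonal dominance
  have hrow : ∀ k : Fin p, ∑ j ∈ Finset.univ.erase k, ‖G k j‖ < ‖G k k‖ := by
    intro k
    have hsum : ∑ j ∈ Finset.univ.erase k, ‖G k j‖ ≤ ((p:ℝ) - 1) * ε := by
      calc ∑ j ∈ Finset.univ.erase k, ‖G k j‖
          ≤ ∑ j ∈ Finset.univ.erase k, ε := by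
            refine Finset.sum_le_sum fun j hj => ?_
            exact hGoff k j (fun h => (Finset.ne_of_mem_erase hj) h.symm)
        _ = ((p:ℝ) - 1) * ε := by
            rw [Finset.sum_const, Finset.card_erase_of_mem (Finset.mem_univ k),
              Finset.card_univ, Fintype.card_fin, nsmul_eq_mul]
            have : ((p - 1 : ℕ) : ℝ) = (p:ℝ) - 1 := by
              have : 1 ≤ p := le_trans one_le_two hp
              push_cast [this]
              ring
            rw [this]
    have hkk : ‖G k k‖ = G k k := by
      rw [Real.norm_eq_abs, abs_of_nonneg (le_trans (sq_nonneg δ) (hGdiag k))]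
    rw [hkk]
    calc ∑ j ∈ Finset.univ.erase k, ‖G k j‖ ≤ ((p:ℝ) - 1) * ε := hsum
      _ < δ ^ 2 := by linarith
      _ ≤ G k k := hGdiag k
  have hdet : G.det ≠ 0 := det_ne_zero_of_sum_row_lt_diag hrow
  have hunit : IsUnit G.det := isUnit_iff_ne_zero.mpr hdet
  -- solve the linear system
  set c : Fin p → ℝ := G⁻¹.mulVec α with hcdef
  have hGc : G.mulVec c = α := by
    rw [hcdef, Matrix.mulVec_mulVec, Matrix.mul_nonsing_inv G hunit, Matrix.one_mulVec]
  have hGc' : ∀ i, ∑ j, G i j * c j = α i := by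
    intro i
    have := congrFun hGc i
    simpa [Matrix.mulVec, dotProduct] using this
  -- bound on the coefficients
  set S : ℝ := ∑ j, |c j| with hSdef
  have hSnn : 0 ≤ S := Finset.sum_nonneg fun j _ => abs_nonneg _
  have hbound : ∀ i, δ ^ 2 * |c i| ≤ |α i| + ε * (S - |c i|) := by
    intro i
    have hsplit : G i i * c i = α i - ∑ j ∈ Finset.univ.erase i, G i j * c j := by
      rw [← hGc' i, ← Finset.add_sum_erase _ _ (Finset.mem_univ i)]
      ring
    have h1 : |G i i * c i| ≤ |α i| + ∑ j ∈ Finset.univ.erase i, |G i j * c j| := by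
      rw [hsplit]
      calc |α i - ∑ j ∈ Finset.univ.erase i, G i j * c j|
          ≤ |α i| + |∑ j ∈ Finset.univ.erase i, G i j * c j| := abs_sub _ _
        _ ≤ |α i| + ∑ j ∈ Finset.univ.erase i, |G i j * c j| := by
            gcongr
            exact Finset.abs_sum_le_sum_abs _ _
    have h2 : ∑ j ∈ Finset.univ.erase i, |G i j * c j| ≤ ε * (S - |c i|) := by
      have : ∑ j ∈ Finset.univ.erase i, |G i j * c j|
          ≤ ∑ j ∈ Finset.univ.erase i, ε * |c j| := by
        refine Finset.sum_le_sum fun j hj => ?_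
        rw [abs_mul]
        exact mul_le_mul_of_nonneg_right
          (hGoff i j (fun h => (Finset.ne_of_mem_erase hj) h.symm)) (abs_nonneg _)
      rw [← Finset.mul_sum] at this
      have herase : ∑ j ∈ Finset.univ.erase i, |c j| = S - |c i| := by
        rw [hSdef, Finset.sum_erase_eq_sub (Finset.mem_univ i)]
      rw [herase] at this
      exact this
    have h3 : δ ^ 2 * |c i| ≤ |G i i * c i| := by
      rw [abs_mul, abs_of_nonneg (le_trans (sq_nonneg δ) (hGdiag i))]
      exact mul_le_mul_of_nonneg_right (hGdiag i) (abs_nonneg _)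
    linarith
  have hS : S ≤ (∑ j, |α j|) / (δ ^ 2 - ((p : ℝ) - 1) * ε) := by
    rw [le_div_iff₀ hDpos]
    have hsumall : ∑ i, δ ^ 2 * |c i| ≤ ∑ i, (|α i| + ε * (S - |c i|)) :=
      Finset.sum_le_sum fun i _ => hbound i
    have hl : ∑ i, δ ^ 2 * |c i| = δ ^ 2 * S := by
      rw [hSdef, Finset.mul_sum]
    have hr : ∑ i : Fin p, (|α i| + ε * (S - |c i|))
        = (∑ i, |α i|) + ε * ((p:ℝ) * S - S) := by
      rw [Finset.sum_add_distrib, ← Finset.mul_sum]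
      congr 1
      congr 1
      rw [Finset.sum_sub_distrib, Finset.sum_const, Finset.card_univ, Fintype.card_fin,
        nsmul_eq_mul, ← hSdef]
    rw [hl, hr] at hsumall
    nlinarith
  -- define h
  refine ⟨∑ j, (c j : ℂ) • ξ j, ?_, ?_, ?_⟩
  · rw [star_sum]
    refine Finset.sum_congr rfl fun j _ => ?_
    rw [star_smul, hsa j, Complex.star_def, Complex.conj_ofReal]
  · calc ‖∑ j, (c j : ℂ) • ξ j‖ ≤ ∑ j, ‖(c j : ℂ) • ξ j‖ := norm_sum_le _ _
      _ ≤ ∑ j, |c j| := by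
          refine Finset.sum_le_sum fun j _ => ?_
          rw [norm_smul, Complex.norm_real, Real.norm_eq_abs]
          exact mul_le_of_le_one_right (abs_nonneg _) (hcontr j)
      _ ≤ _ := hS
  · intro i
    have hmul : (∑ j, (c j : ℂ) • ξ j) * ξ i = ∑ j, (c j : ℂ) • (ξ j * ξ i) := by
      rw [Finset.sum_mul]
      exact Finset.sum_congr rfl fun j _ => smul_mul_assoc _ _ _
    rw [hmul, map_sum]
    have hτval : ∀ j, τ (ξ j * ξ i) = ((G j i : ℝ) : ℂ) := by
      intro j
      apply Complex.ext
      · simp [hG]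
      · simp [him j i]
    calc ∑ j, τ ((c j : ℂ) • (ξ j * ξ i)) = ∑ j, (c j : ℂ) * ((G j i : ℝ) : ℂ) := by
          refine Finset.sum_congr rfl fun j _ => ?_
          rw [map_smul, hτval j, smul_eq_mul]
      _ = ((∑ j, c j * G j i : ℝ) : ℂ) := by push_cast; ring
      _ = ((α i : ℝ) : ℂ) := by
          congr 1
          rw [← hGc' i]
          exact Finset.sum_congr rfl fun j _ => by rw [hGsymm i j]; ring
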